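/- For all σ > 0 and x, y > 0, the absorbed heat kernel κ(σ,y,x) = exp(-(y-x+σ)²/(2σ))/√(2πσ) · (1 - exp(-2xy/σ)) is nonnegative, and its integral over y ∈ (0,∞) equals 1 - H(σ,x), which is at most 1. -/

import Mathlib

open Real MeasureTheory Set Filter Topology

noncomputable def fph (σ x : ℝ) : ℝ :=
  x * Real.exp (-(x - σ)^2 / (2*σ)) / Real.sqrt (2*Real.pi*σ^3)

noncomputable def erfc (z : ℝ) : ℝ :=
  (2 / Real.sqrt Real.pi) * ∫ t in Set.Ioi z, Real.exp (-t^2)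

noncomputable def fpH (σ x : ℝ) : ℝ :=
  (1/2) * (erfc ((x-σ)/Real.sqrt (2*σ)) + Real.exp (2*x) * erfc ((x+σ)/Real.sqrt (2*σ)))

noncomputable def kap (σ y x : ℝ) : ℝ :=
  Real.exp (-(y - x + σ)^2/(2*σ)) / Real.sqrt (2*Real.pi*σ) * (1 - Real.exp (-(2*x*y)/σ))

lemma integrable_exp_neg_sq' : Integrable (fun t : ℝ => Real.exp (-t^2)) := by
  have := integrable_exp_neg_mul_sq (b := 1) one_pos
  simpa using this

lemma integral_exp_neg_sq' : (∫ t : ℝ, Real.exp (-t^2)) = Real.sqrt Real.pi := by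
  have := integral_gaussian (1 : ℝ)
  simpa using this

lemma erfc_nonneg' (z : ℝ) : 0 ≤ erfc z := by
  unfold erfc
  apply mul_nonneg
  · positivity
  · exact setIntegral_nonneg measurableSet_Ioi fun t _ => (Real.exp_pos _).le

lemma integral_Ioi_exp_neg_sq (z : ℝ) :
    (∫ t in Set.Ioi z, Real.exp (-t^2)) = Real.sqrt Real.pi / 2 * erfc z := by
  unfold erfc
  have hπ : (0:ℝ) < Real.sqrt Real.pi := Real.sqrt_pos.mpr Real.pi_pos
  field_simp

lemma erfc_neg (z : ℝ) : erfc (-z) = 2 - erfc z := by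
  have hneg : (∫ t in Set.Iio z, Real.exp (-(-t)^2)) = ∫ t in Set.Ioi (-z), Real.exp (-t^2) := by
    have := (Measure.measurePreserving_neg (volume : Measure ℝ)).setIntegral_preimage_emb
      (MeasurableEquiv.neg ℝ).measurableEmbedding (fun t => Real.exp (-t^2)) (Set.Ioi (-z))
    simpa [neg_lt] using this
  have hIio : (∫ t in Set.Iio z, Real.exp (-t^2)) = ∫ t in Set.Ioi (-z), Real.exp (-t^2) := by
    simpa using hneg
  have hIic : (∫ t in Set.Iic z, Real.exp (-t^2)) = ∫ t in Set.Iio z, Real.exp (-t^2) := by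
    refine (setIntegral_congr_set ?_).symm
    exact Iio_ae_eq_Iic
  have hsplit := intervalIntegral.integral_Iic_add_Ioi (b := z) (μ := volume)
    integrable_exp_neg_sq'.integrableOn integrable_exp_neg_sq'.integrableOn
  rw [integral_exp_neg_sq'] at hsplit
  unfold erfc
  have hπ : (0:ℝ) < Real.sqrt Real.pi := Real.sqrt_pos.mpr Real.pi_pos
  rw [← hIio, ← hIic]
  field_simp
  nlinarith [Real.sq_sqrt Real.pi_pos.le, hsplit]

lemma gauss_shift (σ : ℝ) (hσ : 0 < σ) (c : ℝ) :
    (∫ y in Set.Ioi (0:ℝ), Real.exp (-(y+c)^2/(2*σ)))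
      = Real.sqrt (2*Real.pi*σ) * ((1/2) * erfc (c / Real.sqrt (2*σ))) := by
  set b := Real.sqrt (2*σ) with hb
  have hbpos : 0 < b := Real.sqrt_pos.mpr (by linarith)
  have hb2 : b^2 = 2*σ := Real.sq_sqrt (by linarith)
  have h1 : (∫ y in Set.Ioi (0:ℝ), Real.exp (-(y+c)^2/(2*σ)))
      = ∫ u in Set.Ioi c, Real.exp (-u^2/(2*σ)) := by
    have := (measurePreserving_add_right (volume : Measure ℝ) c).setIntegral_preimage_emb
      (MeasurableEquiv.addRight c).measurableEmbedding
      (fun u => Real.exp (-u^2/(2*σ))) (Set.Ioi c)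
    simpa using this
  have h2 : (∫ u in Set.Ioi c, Real.exp (-u^2/(2*σ)))
      = b * ∫ t in Set.Ioi (c / b), Real.exp (-t^2) := by
    have := integral_comp_mul_right_Ioi (fun u => Real.exp (-u^2/(2*σ))) (c / b) hbpos
    rw [div_mul_cancel₀ _ hbpos.ne'] at this
    have heq : ∀ t : ℝ, Real.exp (-(t*b)^2/(2*σ)) = Real.exp (-t^2) := by
      intro t
      congr 1
      rw [mul_pow, hb2]
      field_simp
    simp_rw [heq] at this
    rw [this]
    simp [smul_eq_mul]
    field_simp
  have hsq : Real.sqrt (2*Real.pi*σ) = b * Real.sqrt Real.pi := by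
    rw [hb, ← Real.sqrt_mul (by linarith) Real.pi]
    ring_nf
  rw [h1, h2, integral_Ioi_exp_neg_sq, hsq]
  ring

theorem kap_nonneg_and_mass (σ x : ℝ) (hσ : 0 < σ) (hx : 0 < x) :
    (∀ y : ℝ, 0 < y → 0 ≤ kap σ y x) ∧
    (∫ y in Set.Ioi (0:ℝ), kap σ y x) = 1 - fpH σ x ∧
    1 - fpH σ x ≤ 1 := by
  have hs : (0:ℝ) < Real.sqrt (2*Real.pi*σ) := Real.sqrt_pos.mpr (by positivity)
  refine ⟨?_, ?_, ?_⟩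
  · intro y hy
    unfold kap
    apply mul_nonneg
    · positivity
    · have : Real.exp (-(2*x*y)/σ) ≤ 1 := by
        rw [← Real.exp_zero]
        apply Real.exp_le_exp.mpr
        rw [neg_div]
        have : 0 < 2*x*y := by positivity
        have := div_pos this hσ
        linarith
      linarith
  · -- the main computation
    have key : ∀ y : ℝ, kap σ y x
        = Real.exp (-(y+(σ-x))^2/(2*σ)) / Real.sqrt (2*Real.pi*σ)
          - Real.exp (2*x) * (Real.exp (-(y+(σ+x))^2/(2*σ)) / Real.sqrt (2*Real.pi*σ)) := by
      intro y
      have h1 : Real.exp (-(y - x + σ)^2/(2*σ)) = Real.exp (-(y+(σ-x))^2/(2*σ)) := by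
        congr 1; ring
      have h2 : Real.exp (-(y - x + σ)^2/(2*σ)) * Real.exp (-(2*x*y)/σ)
          = Real.exp (2*x) * Real.exp (-(y+(σ+x))^2/(2*σ)) := by
        rw [← Real.exp_add, ← Real.exp_add]
        congr 1
        field_simp
        ring
      unfold kap
      rw [mul_one_sub, div_mul_eq_mul_div, h2, h1]
      ring
    have hint : ∀ c : ℝ, IntegrableOn (fun y : ℝ => Real.exp (-(y+c)^2/(2*σ))) (Set.Ioi 0) := by
      intro c
      have h0 : Integrable (fun y : ℝ => Real.exp (-(1/(2*σ)) * y^2)) :=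
        integrable_exp_neg_mul_sq (by positivity)
      have h1 : Integrable (fun y : ℝ => Real.exp (-(1/(2*σ)) * (y+c)^2)) :=
        h0.comp_add_right c
      have heq : (fun y : ℝ => Real.exp (-(y+c)^2/(2*σ)))
          = fun y : ℝ => Real.exp (-(1/(2*σ)) * (y+c)^2) := by
        funext y; congr 1; field_simp
      rw [heq]
      exact h1.integrableOn
    have hf1 : IntegrableOn
        (fun y : ℝ => Real.exp (-(y+(σ-x))^2/(2*σ)) / Real.sqrt (2*Real.pi*σ)) (Set.Ioi 0) :=
      (hint (σ-x)).div_const _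
    have hf2 : IntegrableOn
        (fun y : ℝ => Real.exp (2*x) * (Real.exp (-(y+(σ+x))^2/(2*σ)) / Real.sqrt (2*Real.pi*σ)))
        (Set.Ioi 0) :=
      ((hint (σ+x)).div_const _).const_mul _
    calc (∫ y in Set.Ioi (0:ℝ), kap σ y x)
        = ∫ y in Set.Ioi (0:ℝ),
            (Real.exp (-(y+(σ-x))^2/(2*σ)) / Real.sqrt (2*Real.pi*σ)
             - Real.exp (2*x) * (Real.exp (-(y+(σ+x))^2/(2*σ)) / Real.sqrt (2*Real.pi*σ))) := by
          simp_rw [key]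
      _ = (∫ y in Set.Ioi (0:ℝ), Real.exp (-(y+(σ-x))^2/(2*σ)) / Real.sqrt (2*Real.pi*σ))
          - ∫ y in Set.Ioi (0:ℝ),
              Real.exp (2*x) * (Real.exp (-(y+(σ+x))^2/(2*σ)) / Real.sqrt (2*Real.pi*σ)) :=
          integral_sub hf1 hf2
      _ = (∫ y in Set.Ioi (0:ℝ), Real.exp (-(y+(σ-x))^2/(2*σ))) / Real.sqrt (2*Real.pi*σ)
          - Real.exp (2*x) *
            ((∫ y in Set.Ioi (0:ℝ), Real.exp (-(y+(σ+x))^2/(2*σ))) / Real.sqrt (2*Real.pi*σ)) := by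
          rw [integral_const_mul, integral_div, integral_div]
      _ = (1/2) * erfc ((σ-x) / Real.sqrt (2*σ))
          - Real.exp (2*x) * ((1/2) * erfc ((σ+x) / Real.sqrt (2*σ))) := by
          rw [gauss_shift σ hσ (σ-x), gauss_shift σ hσ (σ+x)]
          field_simp
      _ = 1 - fpH σ x := by
          have hneg : (σ-x) / Real.sqrt (2*σ) = -((x-σ)/Real.sqrt (2*σ)) := by ring
          rw [hneg, erfc_neg]
          unfold fpH
          have : (σ+x) = (x+σ) := by ring
          rw [this]
          ring
  · have h1 : 0 ≤ fpH σ x := by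
      unfold fpH
      have := erfc_nonneg' ((x-σ)/Real.sqrt (2*σ))
      have := erfc_nonneg' ((x+σ)/Real.sqrt (2*σ))
      have := Real.exp_pos (2*x)
      positivity
    linarith
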